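/- Let K_2 > 0, let â : [0,∞) → ℝ be continuously differentiable with |â(0)| ≤ K_2 and sup_σ |â'(σ)| ≤ K_2, and let h > 0. Define b̂ as the function with b̂(σ) = e^{â(0)}(1 + ∑_{n≥1} (1/n!) Â_n(σ)), Â_n(σ) = σ^n ∫_{u_1+⋯+u_n≤1} â'(u_1σ)⋯â'(u_nσ) du. Then exp(∫_0^∞ e^{−σ/h} â(σ) dσ/h) = ∫_0^∞ e^{−σ/h} b̂(σ) dσ/h. -/

import Mathlib

open MeasureTheory

/-- `AhatR a n σ = σ^n ∫_{u_1+⋯+u_n ≤ 1, u_i ≥ 0} a(u_1 σ)⋯a(u_n σ) du` (real-valued). -/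
noncomputable def AhatR (a : ℝ → ℝ) (n : ℕ) (σ : ℝ) : ℝ :=
  σ ^ n *
    ∫ u in {u : Fin n → ℝ | (∀ i, 0 ≤ u i) ∧ ∑ i, u i ≤ 1}, ∏ i, a (u i * σ)

open Set Filter

lemma expIci (h c : ℝ) (hh : 0 < h) : ∫ σ in Ioi c, Real.exp (-σ/h) = h * Real.exp (-c/h) := by
  have hd : ∀ x ∈ Ici c, HasDerivAt (fun σ : ℝ => -h * Real.exp (-σ/h)) (Real.exp (-x/h)) x := by
    intro x _
    have : HasDerivAt (fun σ : ℝ => -σ/h) (-1/h) x := by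
      simpa using ((hasDerivAt_id x).neg.div_const h)
    have := ((this.exp).const_mul (-h))
    convert this using 1
    · rfl
    · rfl
    · rw [show -h * (Real.exp (-x/h) * (-1/h)) = Real.exp (-x/h) * (h/h) by ring, div_self hh.ne', mul_one]
  have hint : IntegrableOn (fun σ => Real.exp (-σ/h)) (Ioi c) := by
    have := exp_neg_integrableOn_Ioi c (b := 1/h) (by positivity)
    simpa [neg_div, div_eq_inv_mul, mul_comm] using this
  have := integral_Ioi_of_hasDerivAt_of_tendsto' hd hint (m := 0) ?_
  · rw [this]; ring
  · have h1 : Tendsto (fun σ : ℝ => -σ/h) atTop atBot := by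
      apply Tendsto.atBot_div_const hh
      exact tendsto_neg_atBot_iff.mpr tendsto_id
    have : Tendsto (fun σ : ℝ => -h * Real.exp (-σ/h)) atTop (nhds (-h * 0)) :=
      (Real.tendsto_exp_atBot.comp h1).const_mul _
    simpa using this


lemma measSimplex (n : ℕ) (c : ℝ) :
    MeasurableSet {t : Fin n → ℝ | (∀ i, 0 ≤ t i) ∧ ∑ i, t i ≤ c} := by
  apply MeasurableSet.inter
  · exact measurableSet_setOf.mpr <| Measurable.forall fun i =>
      (measurableSet_le measurable_const (measurable_pi_apply i)).mem
  · exact measurableSet_le (Finset.measurable_sum _ fun i _ => measurable_pi_apply i)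
      measurable_const

lemma AhatR_eq_simplex (f : ℝ → ℝ) (n : ℕ) {σ : ℝ} (hσ : 0 < σ) :
    AhatR f n σ = ∫ t in {t : Fin n → ℝ | (∀ i, 0 ≤ t i) ∧ ∑ i, t i ≤ σ}, ∏ i, f (t i) := by
  set g : (Fin n → ℝ) → ℝ :=
    indicator {t : Fin n → ℝ | (∀ i, 0 ≤ t i) ∧ ∑ i, t i ≤ σ} (fun v => ∏ i, f (v i)) with hg
  have hmem : ∀ u : Fin n → ℝ,
      (σ • u ∈ {t : Fin n → ℝ | (∀ i, 0 ≤ t i) ∧ ∑ i, t i ≤ σ}) ↔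
      (u ∈ {u : Fin n → ℝ | (∀ i, 0 ≤ u i) ∧ ∑ i, u i ≤ 1}) := by
    intro u
    simp only [mem_setOf_eq, Pi.smul_apply, smul_eq_mul, ← Finset.mul_sum]
    constructor
    · rintro ⟨h1, h2⟩
      exact ⟨fun i => nonneg_of_mul_nonneg_left (mul_comm σ (u i) ▸ h1 i) hσ,
        by nlinarith [h2]⟩
    · rintro ⟨h1, h2⟩
      exact ⟨fun i => mul_nonneg hσ.le (h1 i), by nlinarith⟩
  have key : ∀ u : Fin n → ℝ,
      g (σ • u) = indicator {u : Fin n → ℝ | (∀ i, 0 ≤ u i) ∧ ∑ i, u i ≤ 1}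
        (fun u => ∏ i, f (u i * σ)) u := by
    intro u
    by_cases hu : u ∈ {u : Fin n → ℝ | (∀ i, 0 ≤ u i) ∧ ∑ i, u i ≤ 1}
    · rw [indicator_of_mem hu, hg, indicator_of_mem ((hmem u).mpr hu)]
      simp [mul_comm σ]
    · rw [indicator_of_notMem hu, hg, indicator_of_notMem (fun hc => hu ((hmem u).mp hc))]
  have h1 : ∫ u in {u : Fin n → ℝ | (∀ i, 0 ≤ u i) ∧ ∑ i, u i ≤ 1}, ∏ i, f (u i * σ)
      = ∫ u, g (σ • u) := by
    rw [← integral_indicator (measSimplex n 1)]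
    exact integral_congr_ae (Filter.Eventually.of_forall fun u => (key u).symm)
  have h2 : ∫ u, g (σ • u) = |((σ : ℝ) ^ (Module.finrank ℝ (Fin n → ℝ)))⁻¹| • ∫ v, g v :=
    MeasureTheory.Measure.integral_comp_smul volume g σ
  rw [AhatR, h1, h2, hg, integral_indicator (measSimplex n σ)]
  rw [Module.finrank_fintype_fun_eq_card]
  simp only [Fintype.card_fin, smul_eq_mul]
  rw [abs_of_nonneg (by positivity)]
  field_simp

noncomputable def Ff (f : ℝ → ℝ) (h : ℝ) (n : ℕ) : ((Fin n → ℝ) × ℝ) → ℝ :=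
  indicator {p : (Fin n → ℝ) × ℝ | (∀ i, 0 ≤ p.1 i) ∧ ∑ i, p.1 i ≤ p.2}
    (fun p => Real.exp (-p.2/h) * ∏ i, f (p.1 i))

noncomputable def psiF (f : ℝ → ℝ) (h : ℝ) : ℝ → ℝ :=
  indicator (Ici 0) (fun x => Real.exp (-x/h) * f x)

lemma measFfSet (n : ℕ) : MeasurableSet
    {p : (Fin n → ℝ) × ℝ | (∀ i, 0 ≤ p.1 i) ∧ ∑ i, p.1 i ≤ p.2} := by
  apply MeasurableSet.inter
  · exact measurableSet_setOf.mpr <| Measurable.forall fun i =>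
      (measurableSet_le measurable_const ((measurable_pi_apply i).comp measurable_fst)).mem
  · exact measurableSet_le
      (Finset.measurable_sum _ fun i _ => (measurable_pi_apply i).comp measurable_fst)
      measurable_snd

lemma Ff_abs (f : ℝ → ℝ) (h : ℝ) (n : ℕ) (p : (Fin n → ℝ) × ℝ) :
    |Ff f h n p| = Ff (fun x => |f x|) h n p := by
  unfold Ff
  by_cases hp : p ∈ {p : (Fin n → ℝ) × ℝ | (∀ i, 0 ≤ p.1 i) ∧ ∑ i, p.1 i ≤ p.2}
  · rw [indicator_of_mem hp, indicator_of_mem hp, abs_mul, abs_of_pos (Real.exp_pos _),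
      Finset.abs_prod]
  · rw [indicator_of_notMem hp, indicator_of_notMem hp, abs_zero]

lemma Ff_slice_integral {f : ℝ → ℝ} {h : ℝ} (hh : 0 < h) (n : ℕ) (t : Fin n → ℝ) :
    ∫ σ : ℝ, Ff f h n (t, σ) = h * ∏ i, psiF f h (t i) := by
  by_cases ht : ∀ i, 0 ≤ t i
  · have hslice : (fun σ => Ff f h n (t, σ)) =
        indicator (Ici (∑ i, t i)) (fun σ => Real.exp (-σ/h) * ∏ i, f (t i)) := by
      ext σ
      unfold Ff
      simp only [Set.indicator_apply, mem_setOf_eq, mem_Ici]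
      by_cases hσ : ∑ i, t i ≤ σ
      · simp [hσ, ht]
      · simp [hσ]
    rw [hslice, integral_indicator measurableSet_Ici, integral_Ici_eq_integral_Ioi,
      integral_mul_const]
    have h1 : ∫ σ in Ioi (∑ i, t i), Real.exp (-σ/h) = h * Real.exp (-(∑ i, t i)/h) :=
      expIci h _ hh
    rw [h1]
    have h2 : ∀ i, psiF f h (t i) = Real.exp (-(t i)/h) * f (t i) := fun i =>
      indicator_of_mem (mem_Ici.mpr (ht i)) _
    simp_rw [h2]
    have h3 : ∏ i, (Real.exp (-t i / h) * f (t i))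
        = Real.exp (-(∑ i, t i) / h) * ∏ i, f (t i) := by
      rw [Finset.prod_mul_distrib, ← Real.exp_sum]
      congr 2
      simp only [neg_div, Finset.sum_neg_distrib, Finset.sum_div]
    rw [h3]
    ring
  · push_neg at ht
    obtain ⟨i, hi⟩ := ht
    have hz : (fun σ => Ff f h n (t, σ)) = fun _ => (0:ℝ) := by
      ext σ; exact indicator_of_notMem (fun hc => absurd (hc.1 i) (not_le.mpr hi)) _
    have hz2 : psiF f h (t i) = 0 := indicator_of_notMem (fun hc => absurd hc (not_le.mpr hi)) _
    rw [hz, integral_zero, Finset.prod_eq_zero (Finset.mem_univ i) hz2, mul_zero]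

lemma expIntOn {h : ℝ} (hh : 0 < h) (c : ℝ) :
    IntegrableOn (fun σ => Real.exp (-σ/h)) (Ioi c) := by
  have := exp_neg_integrableOn_Ioi c (b := 1/h) (by positivity)
  simpa [neg_div, div_eq_inv_mul, mul_comm] using this

lemma psiF_integrable {f : ℝ → ℝ} (hf : Continuous f) {K h : ℝ} (hK : ∀ x, |f x| ≤ K)
    (hh : 0 < h) : Integrable (psiF f h) := by
  rw [psiF, integrable_indicator_iff measurableSet_Ici,
    integrableOn_Ici_iff_integrableOn_Ioi]
  apply Integrable.mono' (g := fun x => K * Real.exp (-x/h))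
  · exact (expIntOn hh 0).const_mul K
  · exact ((Real.continuous_exp.comp ((continuous_id.neg).div_const h)).mul
      hf).aestronglyMeasurable.restrict
  · refine Filter.Eventually.of_forall fun x => ?_
    rw [Real.norm_eq_abs, abs_mul, abs_of_pos (Real.exp_pos _)]
    calc Real.exp (-x/h) * |f x| ≤ Real.exp (-x/h) * K :=
          mul_le_mul_of_nonneg_left (hK x) (Real.exp_pos _).le
      _ = K * Real.exp (-x/h) := mul_comm _ _

lemma Ff_slice_integrable {f : ℝ → ℝ} {h : ℝ} (hh : 0 < h) (n : ℕ) (t : Fin n → ℝ) :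
    Integrable (fun σ => Ff f h n (t, σ)) := by
  by_cases ht : ∀ i, 0 ≤ t i
  · have hslice : (fun σ => Ff f h n (t, σ)) =
        indicator (Ici (∑ i, t i)) (fun σ => Real.exp (-σ/h) * ∏ i, f (t i)) := by
      ext σ
      unfold Ff
      simp only [Set.indicator_apply, mem_setOf_eq, mem_Ici]
      by_cases hσ : ∑ i, t i ≤ σ
      · simp [hσ, ht]
      · simp [hσ]
    rw [hslice, integrable_indicator_iff measurableSet_Ici,
      integrableOn_Ici_iff_integrableOn_Ioi]
    exact (expIntOn hh _).mul_const _
  · push_neg at ht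
    obtain ⟨i, hi⟩ := ht
    have hz : (fun σ => Ff f h n (t, σ)) = fun _ => (0:ℝ) := by
      ext σ; exact indicator_of_notMem (fun hc => absurd (hc.1 i) (not_le.mpr hi)) _
    rw [hz]
    exact integrable_zero _ _ _

lemma Ff_aesm {f : ℝ → ℝ} (hf : Continuous f) (h : ℝ) (n : ℕ) :
    AEStronglyMeasurable (Ff f h n) ((volume : Measure (Fin n → ℝ)).prod volume) := by
  apply (Continuous.aestronglyMeasurable ?_).indicator (measFfSet n)
  exact (Real.continuous_exp.comp ((continuous_snd.neg).div_const h)).mul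
    (continuous_finset_prod Finset.univ fun i _ => hf.comp
      ((continuous_apply i).comp continuous_fst))

lemma Ff_integrable {f : ℝ → ℝ} (hf : Continuous f) {K h : ℝ} (hK : ∀ x, |f x| ≤ K)
    (hh : 0 < h) (n : ℕ) : Integrable (Ff f h n) := by
  rw [MeasureTheory.Measure.volume_eq_prod]
  refine (integrable_prod_iff (Ff_aesm hf h n)).mpr ⟨?_, ?_⟩
  · exact Filter.Eventually.of_forall fun t => Ff_slice_integrable hh n t
  · have heq : (fun t : Fin n → ℝ => ∫ σ, ‖Ff f h n (t, σ)‖)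
        = fun t => h * ∏ i, psiF (fun x => |f x|) h (t i) := by
      ext t
      simp_rw [Real.norm_eq_abs, Ff_abs]
      exact Ff_slice_integral hh n t
    rw [heq]
    exact (Integrable.fintype_prod (f := fun (_ : Fin n) => psiF (fun y => |f y|) h)
      (fun i => psiF_integrable hf.abs (fun x => by simpa using hK x) hh)).const_mul h

lemma marg_eq (f : ℝ → ℝ) (h : ℝ) (n : ℕ) {σ : ℝ} (hσ : σ ∈ Ioi (0:ℝ)) :
    Real.exp (-σ/h) * AhatR f n σ = ∫ t, Ff f h n (t, σ) := by
  rw [AhatR_eq_simplex f n hσ, ← MeasureTheory.integral_const_mul,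
    ← integral_indicator (measSimplex n σ)]
  apply integral_congr_ae
  refine Filter.Eventually.of_forall fun t => ?_
  unfold Ff
  simp only [Set.indicator_apply, mem_setOf_eq]

lemma key_integral {f : ℝ → ℝ} (hf : Continuous f) {K h : ℝ} (hK : ∀ x, |f x| ≤ K)
    (hh : 0 < h) (n : ℕ) :
    ∫ σ in Ioi (0:ℝ), Real.exp (-σ/h) * AhatR f n σ
      = h * (∫ x in Ioi (0:ℝ), Real.exp (-x/h) * f x) ^ n := by
  have hFf := Ff_integrable hf hK hh n
  rw [MeasureTheory.Measure.volume_eq_prod] at hFf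
  have hmarg : ∀ σ ∈ Ioi (0:ℝ), Real.exp (-σ/h) * AhatR f n σ = ∫ t, Ff f h n (t, σ) :=
    fun σ hσ => marg_eq f h n hσ
  have step1 : ∫ σ in Ioi (0:ℝ), Real.exp (-σ/h) * AhatR f n σ
      = ∫ σ in Ioi (0:ℝ), ∫ t, Ff f h n (t, σ) :=
    setIntegral_congr_fun measurableSet_Ioi hmarg
  have step2 : ∫ σ in Ioi (0:ℝ), ∫ t, Ff f h n (t, σ) = ∫ σ, ∫ t, Ff f h n (t, σ) := by
    apply setIntegral_eq_integral_of_ae_compl_eq_zero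
    have h0 : ∀ᵐ σ : ℝ, σ ≠ 0 := by
      rw [ae_iff]
      simpa using measure_singleton (0:ℝ)
    filter_upwards [h0] with σ hσ0 hσ
    have hneg : σ < 0 := lt_of_le_of_ne (not_lt.mp hσ) hσ0
    have : ∀ t : Fin n → ℝ, Ff f h n (t, σ) = 0 := by
      intro t
      refine indicator_of_notMem (fun hc => ?_) _
      have : (0:ℝ) ≤ ∑ i, t i := Finset.sum_nonneg fun i _ => hc.1 i
      linarith [hc.2]
    simp only [this, integral_zero]
  have step3 : ∫ σ, ∫ t, Ff f h n (t, σ) = ∫ t, ∫ σ, Ff f h n (t, σ) :=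
    (integral_integral_swap (f := fun t σ => Ff f h n (t, σ)) hFf).symm
  have step4 : ∫ t, ∫ σ, Ff f h n (t, σ) = h * (∫ x, psiF f h x) ^ n := by
    simp_rw [Ff_slice_integral hh n]
    rw [MeasureTheory.integral_const_mul, MeasureTheory.volume_pi,
      MeasureTheory.integral_fintype_prod_eq_pow (ι := Fin n) (psiF f h), Fintype.card_fin]
  have step5 : ∫ x, psiF f h x = ∫ x in Ioi (0:ℝ), Real.exp (-x/h) * f x := by
    rw [psiF, integral_indicator measurableSet_Ici, integral_Ici_eq_integral_Ioi]
  rw [step1, step2, step3, step4, step5]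

lemma key_integrableOn {f : ℝ → ℝ} (hf : Continuous f) {K h : ℝ} (hK : ∀ x, |f x| ≤ K)
    (hh : 0 < h) (n : ℕ) :
    IntegrableOn (fun σ => Real.exp (-σ/h) * AhatR f n σ) (Ioi 0) := by
  have hFf := Ff_integrable hf hK hh n
  rw [MeasureTheory.Measure.volume_eq_prod] at hFf
  have hmargInt : Integrable (fun σ => ∫ t, Ff f h n (t, σ)) := hFf.integral_prod_right
  exact (hmargInt.integrableOn).congr_fun
    (fun σ hσ => (marg_eq f h n hσ).symm) measurableSet_Ioi

lemma AhatR_abs_le {f : ℝ → ℝ} (n : ℕ) {σ : ℝ} (hσ : σ ∈ Ioi (0:ℝ)) :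
    |AhatR f n σ| ≤ AhatR (fun x => |f x|) n σ := by
  rw [AhatR_eq_simplex f n hσ, AhatR_eq_simplex (fun x => |f x|) n hσ,
    ← Real.norm_eq_abs]
  calc ‖∫ t in {t : Fin n → ℝ | (∀ i, 0 ≤ t i) ∧ ∑ i, t i ≤ σ}, ∏ i, f (t i)‖
      ≤ ∫ t in {t : Fin n → ℝ | (∀ i, 0 ≤ t i) ∧ ∑ i, t i ≤ σ}, ‖∏ i, f (t i)‖ :=
        norm_integral_le_integral_norm _
    _ = ∫ t in {t : Fin n → ℝ | (∀ i, 0 ≤ t i) ∧ ∑ i, t i ≤ σ}, ∏ i, |f (t i)| := by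
        apply integral_congr_ae
        refine Filter.Eventually.of_forall fun t => ?_
        simp [Real.norm_eq_abs, Finset.abs_prod]

lemma eAbsInt {f : ℝ → ℝ} (hf : Continuous f) {K h : ℝ} (hK : ∀ x, |f x| ≤ K)
    (hh : 0 < h) : IntegrableOn (fun x => Real.exp (-x/h) * |f x|) (Ioi (0:ℝ)) := by
  apply Integrable.mono' (g := fun x => K * Real.exp (-x/h))
  · exact (expIntOn hh 0).const_mul K
  · exact ((Real.continuous_exp.comp ((continuous_id.neg).div_const h)).mul
      hf.abs).aestronglyMeasurable.restrict
  · refine Filter.Eventually.of_forall fun x => ?_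
    rw [Real.norm_eq_abs, abs_mul, abs_of_pos (Real.exp_pos _), abs_abs]
    calc Real.exp (-x/h) * |f x| ≤ Real.exp (-x/h) * K :=
          mul_le_mul_of_nonneg_left (hK x) (Real.exp_pos _).le
      _ = K * Real.exp (-x/h) := mul_comm _ _

lemma eAbs_le {f : ℝ → ℝ} (hf : Continuous f) {K h : ℝ} (hK : ∀ x, |f x| ≤ K)
    (hh : 0 < h) : ∫ x in Ioi (0:ℝ), Real.exp (-x/h) * |f x| ≤ K * h := by
  have : ∫ x in Ioi (0:ℝ), K * Real.exp (-x/h) = K * h := by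
    rw [MeasureTheory.integral_const_mul, expIci h 0 hh]
    simp
  rw [← this]
  apply setIntegral_mono_on (eAbsInt hf hK hh) ((expIntOn hh 0).const_mul K)
    measurableSet_Ioi
  intro x _
  calc Real.exp (-x/h) * |f x| ≤ Real.exp (-x/h) * K :=
        mul_le_mul_of_nonneg_left (hK x) (Real.exp_pos _).le
    _ = K * Real.exp (-x/h) := mul_comm _ _

lemma key_norm_bound {f : ℝ → ℝ} (hf : Continuous f) {K h : ℝ} (hK : ∀ x, |f x| ≤ K)
    (hK0 : 0 ≤ K) (hh : 0 < h) (n : ℕ) :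
    ∫ σ in Ioi (0:ℝ), ‖Real.exp (-σ/h) * AhatR f n σ‖ ≤ h * (K * h) ^ n := by
  have habs : ∀ x, |(fun y => |f y|) x| ≤ K := fun x => by simpa using hK x
  have h1 : ∫ σ in Ioi (0:ℝ), ‖Real.exp (-σ/h) * AhatR f n σ‖
      ≤ ∫ σ in Ioi (0:ℝ), Real.exp (-σ/h) * AhatR (fun x => |f x|) n σ := by
    apply integral_mono_of_nonneg
    · exact Filter.Eventually.of_forall fun σ => norm_nonneg _
    · exact key_integrableOn hf.abs habs hh n
    · rw [Filter.EventuallyLE, ae_restrict_iff' measurableSet_Ioi]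
      refine Filter.Eventually.of_forall fun σ hσ => ?_
      rw [Real.norm_eq_abs, abs_mul, abs_of_pos (Real.exp_pos _)]
      exact mul_le_mul_of_nonneg_left (AhatR_abs_le n hσ) (Real.exp_pos _).le
  have h2 : ∫ σ in Ioi (0:ℝ), Real.exp (-σ/h) * AhatR (fun x => |f x|) n σ
      = h * (∫ x in Ioi (0:ℝ), Real.exp (-x/h) * |f x|) ^ n :=
    key_integral hf.abs habs hh n
  have h3 : (∫ x in Ioi (0:ℝ), Real.exp (-x/h) * |f x|) ^ n ≤ (K * h) ^ n := by
    apply pow_le_pow_left₀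
    · exact setIntegral_nonneg measurableSet_Ioi fun x _ =>
        mul_nonneg (Real.exp_pos _).le (abs_nonneg _)
    · exact eAbs_le hf hK hh
  calc ∫ σ in Ioi (0:ℝ), ‖Real.exp (-σ/h) * AhatR f n σ‖
      ≤ h * (∫ x in Ioi (0:ℝ), Real.exp (-x/h) * |f x|) ^ n := h1.trans_eq h2
    _ ≤ h * (K * h) ^ n := by nlinarith [h3, hh.le]

lemma AhatR_le_pow {f : ℝ → ℝ} (hf : Continuous f) {K : ℝ} (hK : ∀ x, |f x| ≤ K) (hK0 : 0 ≤ K)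
    (n : ℕ) {σ : ℝ} (hσ : 0 < σ) : |AhatR f n σ| ≤ (K * σ) ^ n := by
  have hsub : {u : Fin n → ℝ | (∀ i, 0 ≤ u i) ∧ ∑ i, u i ≤ 1}
      ⊆ Set.pi univ (fun _ : Fin n => Icc (0:ℝ) 1) := by
    intro t ht
    intro i _
    exact ⟨ht.1 i, le_trans (Finset.single_le_sum (fun j _ => ht.1 j) (Finset.mem_univ i)) ht.2⟩
  have hvol : volume {u : Fin n → ℝ | (∀ i, 0 ≤ u i) ∧ ∑ i, u i ≤ 1} ≤ 1 := by
    calc volume {u : Fin n → ℝ | (∀ i, 0 ≤ u i) ∧ ∑ i, u i ≤ 1}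
        ≤ volume (Set.pi univ (fun _ : Fin n => Icc (0:ℝ) 1)) := measure_mono hsub
      _ = 1 := by
        rw [volume_pi_pi]
        simp
  have hlt : volume {u : Fin n → ℝ | (∀ i, 0 ≤ u i) ∧ ∑ i, u i ≤ 1} < ⊤ :=
    lt_of_le_of_lt hvol (by norm_num)
  have hbd : ‖∫ u in {u : Fin n → ℝ | (∀ i, 0 ≤ u i) ∧ ∑ i, u i ≤ 1}, ∏ i, f (u i * σ)‖
      ≤ K ^ n * (volume {u : Fin n → ℝ | (∀ i, 0 ≤ u i) ∧ ∑ i, u i ≤ 1}).toReal := by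
    apply norm_setIntegral_le_of_norm_le_const hlt
    · intro u _
      rw [Real.norm_eq_abs, Finset.abs_prod]
      calc ∏ i, |f (u i * σ)| ≤ ∏ _i : Fin n, K :=
            Finset.prod_le_prod (fun i _ => abs_nonneg _) (fun i _ => hK _)
        _ = K ^ n := by simp
  have htr : (volume {u : Fin n → ℝ | (∀ i, 0 ≤ u i) ∧ ∑ i, u i ≤ 1}).toReal ≤ 1 := by
    refine ENNReal.toReal_le_of_le_ofReal one_pos.le ?_
    simpa using hvol
  rw [AhatR, abs_mul, abs_pow, abs_of_pos hσ]
  calc σ ^ n * |∫ u in {u : Fin n → ℝ | (∀ i, 0 ≤ u i) ∧ ∑ i, u i ≤ 1}, ∏ i, f (u i * σ)|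
      ≤ σ ^ n * (K ^ n * 1) := by
        apply mul_le_mul_of_nonneg_left _ (by positivity)
        calc |∫ u in {u : Fin n → ℝ | (∀ i, 0 ≤ u i) ∧ ∑ i, u i ≤ 1}, ∏ i, f (u i * σ)|
            ≤ K ^ n * (volume {u : Fin n → ℝ | (∀ i, 0 ≤ u i) ∧ ∑ i, u i ≤ 1}).toReal := hbd
          _ ≤ K ^ n * 1 := mul_le_mul_of_nonneg_left htr (by positivity)
    _ = (K * σ) ^ n := by rw [mul_pow]; ring

lemma ibp {a : ℝ → ℝ} (ha : ContDiff ℝ 1 a) {K h : ℝ}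
    (ha' : ∀ x, |deriv a x| ≤ K) (hK : 0 < K) (hh : 0 < h) :
    ∫ σ in Ioi (0:ℝ), Real.exp (-σ/h) * a σ / h
      = a 0 + ∫ σ in Ioi (0:ℝ), Real.exp (-σ/h) * deriv a σ := by
  have hdiff : Differentiable ℝ a := ha.differentiable one_ne_zero
  have hlin : ∀ σ : ℝ, |a σ| ≤ |a 0| + K * |σ| := by
    intro σ
    have := Convex.norm_image_sub_le_of_norm_deriv_le (f := a)
      (fun x _ => hdiff x) (s := univ)
      (fun x _ => by simpa [Real.norm_eq_abs] using ha' x)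
      convex_univ (mem_univ 0) (mem_univ σ)
    rw [Real.norm_eq_abs, Real.norm_eq_abs, sub_zero] at this
    calc |a σ| = |a 0 + (a σ - a 0)| := by ring_nf
      _ ≤ |a 0| + |a σ - a 0| := abs_add_le _ _
      _ ≤ |a 0| + K * |σ| := by linarith
  set C := |a 0| + 2*h*K with hC
  have haux : ∀ σ : ℝ, 0 ≤ σ →
      (|a 0| + K*σ) * Real.exp (-σ/h) ≤ C * Real.exp (-σ/(2*h)) := by
    intro σ hσ
    have e1 : Real.exp (-σ/h) = Real.exp (-σ/(2*h)) * Real.exp (-σ/(2*h)) := by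
      rw [← Real.exp_add]; congr 1; field_simp; ring
    have e2 : Real.exp (-σ/(2*h)) ≤ 1 := by
      rw [Real.exp_le_one_iff]
      have : 0 < 2*h := by linarith
      exact div_nonpos_of_nonpos_of_nonneg (by linarith) this.le
    have e3 : σ * Real.exp (-σ/(2*h)) ≤ 2*h := by
      have h1 := Real.add_one_le_exp (σ/(2*h))
      have h2 : Real.exp (-σ/(2*h)) = (Real.exp (σ/(2*h)))⁻¹ := by
        rw [← Real.exp_neg]; congr 1; ring
      have epos := Real.exp_pos (σ/(2*h))
      rw [h2]
      rw [mul_inv_le_iff₀ epos]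
      have : σ = 2*h * (σ/(2*h)) := by field_simp
      nlinarith
    have epos2 := Real.exp_pos (-σ/(2*h))
    rw [e1, hC]
    have hEE : Real.exp (-σ/(2*h)) * Real.exp (-σ/(2*h)) ≤ Real.exp (-σ/(2*h)) := by
      nlinarith
    have hE1 : |a 0| * (Real.exp (-σ/(2*h)) * Real.exp (-σ/(2*h)))
        ≤ |a 0| * Real.exp (-σ/(2*h)) := mul_le_mul_of_nonneg_left hEE (abs_nonneg _)
    have hE2 : K * σ * (Real.exp (-σ/(2*h)) * Real.exp (-σ/(2*h)))
        ≤ 2*h*K * Real.exp (-σ/(2*h)) := by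
      have hmul := mul_le_mul_of_nonneg_left e3 (mul_nonneg hK.le epos2.le)
      nlinarith [hmul]
    nlinarith [hE1, hE2]
  have hcont_e : Continuous (fun σ : ℝ => Real.exp (-σ/h)) :=
    Real.continuous_exp.comp ((continuous_id.neg).div_const h)
  have hInt_ea : IntegrableOn (fun σ => Real.exp (-σ/h) * a σ) (Ioi (0:ℝ)) := by
    apply Integrable.mono' (g := fun σ => C * Real.exp (-σ/(2*h)))
    · exact (expIntOn (by linarith : (0:ℝ) < 2*h) 0).const_mul C
    · exact (hcont_e.mul ha.continuous).aestronglyMeasurable.restrict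
    · refine (ae_restrict_iff' measurableSet_Ioi).mpr
        (Filter.Eventually.of_forall fun σ hσ => ?_)
      have hσ0 : (0:ℝ) ≤ σ := (le_of_lt hσ)
      rw [Real.norm_eq_abs, abs_mul, abs_of_pos (Real.exp_pos _)]
      calc Real.exp (-σ/h) * |a σ| ≤ Real.exp (-σ/h) * (|a 0| + K * |σ|) :=
            mul_le_mul_of_nonneg_left (hlin σ) (Real.exp_pos _).le
        _ = (|a 0| + K*σ) * Real.exp (-σ/h) := by rw [abs_of_nonneg hσ0]; ring
        _ ≤ C * Real.exp (-σ/(2*h)) := haux σ hσ0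
  have hInt_ea' : IntegrableOn (fun σ => Real.exp (-σ/h) * deriv a σ) (Ioi (0:ℝ)) := by
    apply Integrable.mono' (g := fun σ => K * Real.exp (-σ/h))
    · exact (expIntOn hh 0).const_mul K
    · exact (hcont_e.mul (ha.continuous_deriv le_rfl)).aestronglyMeasurable.restrict
    · refine Filter.Eventually.of_forall fun σ => ?_
      rw [Real.norm_eq_abs, abs_mul, abs_of_pos (Real.exp_pos _)]
      calc Real.exp (-σ/h) * |deriv a σ| ≤ Real.exp (-σ/h) * K :=
            mul_le_mul_of_nonneg_left (ha' σ) (Real.exp_pos _).le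
        _ = K * Real.exp (-σ/h) := mul_comm _ _
  have hderiv : ∀ x ∈ Ici (0:ℝ), HasDerivAt (fun σ => -(Real.exp (-σ/h) * a σ))
      (Real.exp (-x/h) * a x / h - Real.exp (-x/h) * deriv a x) x := by
    intro x _
    have hexp : HasDerivAt (fun σ : ℝ => Real.exp (-σ/h)) (Real.exp (-x/h) * (-1/h)) x := by
      have : HasDerivAt (fun σ : ℝ => -σ/h) (-1/h) x := by
        simpa using ((hasDerivAt_id x).neg.div_const h)
      exact this.exp
    have hax : HasDerivAt a (deriv a x) x := (hdiff x).hasDerivAt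
    have := (hexp.mul hax).neg
    convert this using 1
    · rfl
    · rfl
    · rfl
    · ring
  have htend : Tendsto (fun σ : ℝ => -(Real.exp (-σ/h) * a σ)) atTop (nhds 0) := by
    refine squeeze_zero_norm' (a := fun σ => C * Real.exp (-σ/(2*h))) ?_ ?_
    · filter_upwards [eventually_ge_atTop (0:ℝ)] with σ hσ
      rw [norm_neg, Real.norm_eq_abs, abs_mul, abs_of_pos (Real.exp_pos _)]
      calc Real.exp (-σ/h) * |a σ| ≤ Real.exp (-σ/h) * (|a 0| + K * |σ|) :=
            mul_le_mul_of_nonneg_left (hlin σ) (Real.exp_pos _).le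
        _ = (|a 0| + K*σ) * Real.exp (-σ/h) := by rw [abs_of_nonneg hσ]; ring
        _ ≤ C * Real.exp (-σ/(2*h)) := haux σ hσ
    · have h1 : Tendsto (fun σ : ℝ => -σ/(2*h)) atTop atBot := by
        apply Tendsto.atBot_div_const (by linarith : (0:ℝ) < 2*h)
        exact tendsto_neg_atBot_iff.mpr tendsto_id
      have := (Real.tendsto_exp_atBot.comp h1).const_mul C
      simpa using this
  have hfint : IntegrableOn
      (fun x => Real.exp (-x/h) * a x / h - Real.exp (-x/h) * deriv a x) (Ioi (0:ℝ)) :=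
    (hInt_ea.div_const h).sub hInt_ea'
  have hmain := integral_Ioi_of_hasDerivAt_of_tendsto' hderiv hfint htend
  rw [integral_sub (hInt_ea.div_const h) hInt_ea'] at hmain
  have h0 : Real.exp (-(0:ℝ)/h) = 1 := by norm_num
  rw [h0] at hmain
  simp only [neg_zero, zero_div, Real.exp_zero, one_mul] at hmain
  linarith [hmain]

lemma AhatR_zero (f : ℝ → ℝ) (σ : ℝ) : AhatR f 0 σ = 1 := by
  have huniv : {u : Fin 0 → ℝ | (∀ i, 0 ≤ u i) ∧ ∑ i, u i ≤ 1} = univ := by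
    ext u
    simp
  rw [AhatR, huniv]
  simp [Measure.restrict_univ]
  rw [Measure.real, MeasureTheory.volume_pi, MeasureTheory.Measure.pi_univ]
  simp


theorem exp_laplace_is_laplace (K₂ : ℝ) (hK₂ : 0 < K₂)
    (a : ℝ → ℝ) (ha : ContDiff ℝ 1 a)
    (ha0 : |a 0| ≤ K₂) (ha' : ∀ σ : ℝ, |deriv a σ| ≤ K₂)
    (h : ℝ) (hh : 0 < h)
    (b : ℝ → ℝ)
    (hb : ∀ σ : ℝ, b σ = Real.exp (a 0) *
        (1 + ∑' n : ℕ, (1 / ((n + 1).factorial : ℝ)) * AhatR (deriv a) (n + 1) σ)) :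
    Real.exp (∫ σ in Set.Ioi (0:ℝ), Real.exp (-σ / h) * a σ / h) =
      ∫ σ in Set.Ioi (0:ℝ), Real.exp (-σ / h) * b σ / h := by
  set f : ℝ → ℝ := deriv a with hf_def
  have hf : Continuous f := ha.continuous_deriv le_rfl
  set I : ℝ := ∫ σ in Ioi (0:ℝ), Real.exp (-σ/h) * f σ with hI
  set T : ℕ → ℝ → ℝ := fun n σ =>
    (Real.exp (a 0) / h * (1 / (n.factorial : ℝ))) * (Real.exp (-σ/h) * AhatR f n σ)
    with hT
  -- pointwise identity on Ioi 0
  have hpt : ∀ σ ∈ Ioi (0:ℝ), Real.exp (-σ/h) * b σ / h = ∑' n, T n σ := by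
    intro σ hσ
    have hσ0 : (0:ℝ) < σ := hσ
    have hsummable : Summable (fun n => T n σ) := by
      apply Summable.of_norm_bounded
        (g := fun n => (Real.exp (a 0) / h * Real.exp (-σ/h)) * ((K₂ * σ) ^ n / n.factorial))
      · exact (Real.summable_pow_div_factorial (K₂ * σ)).mul_left _
      · intro n
        rw [hT, Real.norm_eq_abs]
        have hA := AhatR_le_pow hf ha' hK₂.le n hσ0
        have c1 : (0:ℝ) < Real.exp (a 0) / h := by positivity
        have c2 : (0:ℝ) < (1 : ℝ) / (n.factorial : ℝ) := by positivity
        rw [abs_mul, abs_of_pos (mul_pos c1 c2), abs_mul, abs_of_pos (Real.exp_pos _)]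
        calc Real.exp (a 0) / h * (1 / (n.factorial : ℝ)) * (Real.exp (-σ/h) * |AhatR f n σ|)
            ≤ Real.exp (a 0) / h * (1 / (n.factorial : ℝ)) *
              (Real.exp (-σ/h) * (K₂ * σ) ^ n) := by
              apply mul_le_mul_of_nonneg_left _ (mul_pos c1 c2).le
              exact mul_le_mul_of_nonneg_left hA (Real.exp_pos _).le
          _ = Real.exp (a 0) / h * Real.exp (-σ/h) * ((K₂ * σ) ^ n / n.factorial) := by
              field_simp
    have hsplit := Summable.tsum_eq_zero_add hsummable
    have hT0 : T 0 σ = Real.exp (a 0) / h * Real.exp (-σ/h) := by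
      rw [hT]
      simp [AhatR_zero]
    have htail : ∑' n, T (n+1) σ = (Real.exp (a 0) * Real.exp (-σ/h) / h) *
        ∑' n, (1 / ((n+1).factorial : ℝ)) * AhatR f (n+1) σ := by
      rw [← tsum_mul_left]
      apply tsum_congr
      intro n
      rw [hT]
      ring
    rw [hsplit, hT0, htail, hb σ]
    ring
  have hRHS : ∫ σ in Ioi (0:ℝ), Real.exp (-σ/h) * b σ / h = ∫ σ in Ioi (0:ℝ), ∑' n, T n σ :=
    setIntegral_congr_fun measurableSet_Ioi hpt
  -- integrability of each T n and summability of norms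
  have hTint : ∀ n, IntegrableOn (T n) (Ioi (0:ℝ)) := by
    intro n
    exact (key_integrableOn hf ha' hh n).const_mul _
  have hbound : ∀ n, ∫ σ in Ioi (0:ℝ), ‖T n σ‖
      ≤ Real.exp (a 0) * ((K₂ * h) ^ n / n.factorial) := by
    intro n
    have c1 : (0:ℝ) < Real.exp (a 0) / h * (1 / (n.factorial : ℝ)) := by positivity
    have : ∀ σ : ℝ, ‖T n σ‖ = (Real.exp (a 0) / h * (1 / (n.factorial : ℝ))) *
        ‖Real.exp (-σ/h) * AhatR f n σ‖ := by
      intro σ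
      rw [hT, norm_mul, Real.norm_eq_abs (Real.exp (a 0) / h * _), abs_of_pos c1]
    simp_rw [this]
    rw [MeasureTheory.integral_const_mul]
    have hkey := key_norm_bound hf ha' hK₂.le hh n
    calc Real.exp (a 0) / h * (1 / (n.factorial : ℝ)) *
          ∫ σ in Ioi (0:ℝ), ‖Real.exp (-σ/h) * AhatR f n σ‖
        ≤ Real.exp (a 0) / h * (1 / (n.factorial : ℝ)) * (h * (K₂ * h) ^ n) :=
          mul_le_mul_of_nonneg_left hkey c1.le
      _ = Real.exp (a 0) * ((K₂ * h) ^ n / n.factorial) := by field_simp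
  have hsumnorm : Summable (fun n => ∫ σ in Ioi (0:ℝ), ‖T n σ‖) := by
    apply Summable.of_nonneg_of_le
      (fun n => integral_nonneg fun σ => norm_nonneg _) hbound
    exact (Real.summable_pow_div_factorial (K₂ * h)).mul_left _
  have hswap := integral_tsum_of_summable_integral_norm
    (μ := volume.restrict (Ioi (0:ℝ))) (F := T) hTint hsumnorm
  -- value of each integral
  have hval : ∀ n : ℕ, ∫ σ in Ioi (0:ℝ), T n σ = Real.exp (a 0) * (I ^ n / n.factorial) := by
    intro n
    rw [hT]
    simp only []
    rw [MeasureTheory.integral_const_mul, key_integral hf ha' hh n, ← hI]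
    field_simp
  -- final computation
  have hibp := ibp ha ha' hK₂ hh
  rw [hRHS, ← hswap]
  have : ∑' n, ∫ σ in Ioi (0:ℝ), T n σ = Real.exp (a 0) * Real.exp I := by
    simp_rw [hval]
    rw [tsum_mul_left]
    congr 1
    rw [Real.exp_eq_exp_ℝ, NormedSpace.exp_eq_tsum_div]
  rw [this, hibp, Real.exp_add]
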